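/- With notation as above, P_1(k+a, p+a) ≤ P_2(k,p) for every integer a > 0; that is, if a string of length k+a+1 has its first or last (p+a)-substring as the unique minimum (p+a)-substring, then its length-(k+1) prefix has its first or last p-substring among the minimum p-substrings. -/

import Mathlib

open scoped Classical

def substr {α : Type*} (s : List α) (i len : ℕ) : List α := (s.drop i).take len

/-- The `p`-substring at position `i` is the unique (strict) minimum `p`-substring. -/
def uniqueMinAt {α : Type*} [LinearOrder α] (s : List α) (p i : ℕ) : Prop :=
  i + p ≤ s.length ∧ ∀ j, j + p ≤ s.length → j ≠ i → substr s i p < substr s j p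

/-- The `p`-substring at position `i` is a (not necessarily unique) minimum `p`-substring. -/
def minAt {α : Type*} [LinearOrder α] (s : List α) (p i : ℕ) : Prop :=
  i + p ≤ s.length ∧ ∀ j, j + p ≤ s.length → substr s i p ≤ substr s j p

/-- `P₁(k,p) = |S_{k,p}|/4^{k+1}`. -/
noncomputable def P1 (k p : ℕ) : ℚ :=
  ((Finset.univ.filter fun s : Fin (k + 1) → Fin 4 =>
    uniqueMinAt (List.ofFn s) p 0 ∨ uniqueMinAt (List.ofFn s) p (k + 1 - p)).card : ℚ)
    / 4 ^ (k + 1)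

/-- `P₂(k,p) = |S*_{k,p}|/4^{k+1}`. -/
noncomputable def P2 (k p : ℕ) : ℚ :=
  ((Finset.univ.filter fun s : Fin (k + 1) → Fin 4 =>
    minAt (List.ofFn s) p 0 ∨ minAt (List.ofFn s) p (k + 1 - p)).card : ℚ)
    / 4 ^ (k + 1)

/- ------------------- auxiliary lemmas ------------------- -/

lemma take_le_take' {α} [LinearOrder α] {u v : List α} (hle : u ≤ v) (p : ℕ) :
    u.take p ≤ v.take p := by
  rcases hle.lt_or_eq with h | rfl
  · have h' : List.Lex (· < ·) u v := h
    clear h hle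
    induction h' generalizing p with
    | nil =>
      rcases p with _ | q
      · exact le_rfl
      · exact le_of_lt (show List.Lex (· < ·) _ _ from List.Lex.nil)
    | @cons a l₁ l₂ h ih =>
      cases p with
      | zero => simp
      | succ q => simpa using List.cons_le_cons a (ih q)
    | @rel a₁ l₁ a₂ l₂ h =>
      cases p with
      | zero => simp
      | succ q =>
        apply le_of_lt
        show List.Lex (· < ·) _ _
        exact List.Lex.rel h
  · rfl

lemma substr_take {α : Type*} (t : List α) {j p m : ℕ} (h : j + p ≤ m) :
    substr (t.take m) j p = substr t j p := by
  unfold substr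
  rw [List.drop_take, List.take_take, min_eq_left (by omega)]

lemma take_substr {α : Type*} (t : List α) (i : ℕ) {p q : ℕ} (h : p ≤ q) :
    (substr t i q).take p = substr t i p := by
  unfold substr
  rw [List.take_take, min_eq_left h]

lemma take_ofFn' {n m : ℕ} (h : m ≤ n) (t : Fin n → Fin 4) :
    (List.ofFn t).take m = List.ofFn (fun i : Fin m => t (Fin.castLE h i)) := by
  apply List.ext_getElem
  · simp [h]
  · intro i h1 h2
    simp [List.getElem_take]

lemma main2 (k p a : ℕ) (hpk : p ≤ k)
    (t : Fin (k + a + 1) → Fin 4)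
    (H : uniqueMinAt (List.ofFn t) (p + a) 0 ∨
      uniqueMinAt (List.ofFn t) (p + a) (k + a + 1 - (p + a))) :
    minAt ((List.ofFn t).take (k + 1)) p 0 ∨
      minAt ((List.ofFn t).take (k + 1)) p (k + 1 - p) := by
  set L := List.ofFn t with hLdef
  have hL : L.length = k + a + 1 := by simp [hLdef]
  have hlen : (L.take (k + 1)).length = k + 1 := by
    rw [List.length_take, hL]; omega
  have key : ∀ i j, i + (p + a) ≤ L.length → j + p ≤ k + 1 →
      (∀ j', j' + (p + a) ≤ L.length → j' ≠ i → substr L i (p + a) < substr L j' (p + a)) →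
      substr (L.take (k+1)) i p ≤ substr (L.take (k+1)) j p := by
    intro i j hi hj hmin
    have hi' : i + p ≤ k + 1 := by omega
    rw [substr_take L hi', substr_take L hj]
    rcases eq_or_ne j i with rfl | hji
    · exact le_refl _
    · have hlt := hmin j (by omega) hji
      have := take_le_take' hlt.le p
      rwa [take_substr L i (by omega), take_substr L j (by omega)] at this
  rcases H with ⟨h1, h2⟩ | ⟨h1, h2⟩
  · left
    refine ⟨by omega, fun j hj => ?_⟩
    exact key 0 j h1 (by omega) h2
  · right
    have e : k + a + 1 - (p + a) = k + 1 - p := by omega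
    rw [e] at h1 h2
    refine ⟨by omega, fun j hj => ?_⟩
    exact key (k + 1 - p) j (by omega) (by omega) h2

/-- `P₁(k+a, p+a) ≤ P₂(k,p)` for every integer `a > 0`; moreover if a string
of length `k+a+1` has its first or last `(p+a)`-substring as the unique minimum, then its
length-(k+1) prefix has its first or last `p`-substring among the minimum `p`-substrings. -/
theorem stmt5 (k p a : ℕ) (hp : 0 < p) (hpk : p ≤ k) (ha : 0 < a) :
    P1 (k + a) (p + a) ≤ P2 k p ∧
    ∀ t : Fin (k + a + 1) → Fin 4,
      (uniqueMinAt (List.ofFn t) (p + a) 0 ∨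
        uniqueMinAt (List.ofFn t) (p + a) (k + a + 1 - (p + a))) →
      (minAt ((List.ofFn t).take (k + 1)) p 0 ∨
        minAt ((List.ofFn t).take (k + 1)) p (k + 1 - p)) := by
  constructor
  · have hle : k + 1 ≤ k + a + 1 := by omega
    set A := (Finset.univ.filter fun s : Fin (k + a + 1) → Fin 4 =>
      uniqueMinAt (List.ofFn s) (p + a) 0 ∨
        uniqueMinAt (List.ofFn s) (p + a) (k + a + 1 - (p + a))) with hA
    set B := (Finset.univ.filter fun s : Fin (k + 1) → Fin 4 =>
      minAt (List.ofFn s) p 0 ∨ minAt (List.ofFn s) p (k + 1 - p)) with hB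
    set r : (Fin (k + a + 1) → Fin 4) → (Fin (k + 1) → Fin 4) :=
      fun t i => t (Fin.castLE hle i) with hr
    have hmaps : ∀ t ∈ A, r t ∈ B := by
      intro t ht
      rw [hA, Finset.mem_filter] at ht
      rw [hB, Finset.mem_filter]
      refine ⟨Finset.mem_univ _, ?_⟩
      have := main2 k p a hpk t ht.2
      rwa [take_ofFn' hle t] at this
    have hfib : ∀ s ∈ B, (A.filter fun t => r t = s).card ≤ 4 ^ a := by
      intro s _
      have : ((Finset.univ : Finset (Fin a → Fin 4))).card = 4 ^ a := by
        simp
      rw [← this]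
      apply Finset.card_le_card_of_injOn (fun t (j : Fin a) => t ⟨k + 1 + j, by omega⟩)
      · intro _ _; exact Finset.mem_univ _
      · intro t1 h1 t2 h2 heq
        rw [Finset.mem_coe, Finset.mem_filter] at h1 h2
        funext i
        rcases lt_or_ge i.val (k + 1) with hi | hi
        · have e1 : t1 i = r t1 ⟨i.val, hi⟩ := by simp [hr]
          have e2 : t2 i = r t2 ⟨i.val, hi⟩ := by simp [hr]
          rw [e1, e2, h1.2, h2.2]
        · have hj : i.val - (k + 1) < a := by omega
          have e : ∀ u : Fin (k + a + 1) → Fin 4,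
              u i = (fun (j : Fin a) => u ⟨k + 1 + j, by omega⟩) ⟨i.val - (k+1), hj⟩ := by
            intro u
            congr 1
            ext
            simp
            omega
          rw [e t1, e t2]
          exact congrFun heq _
    have hcard : (A.card : ℚ) ≤ 4 ^ a * B.card := by
      have := Finset.card_le_mul_card_image_of_maps_to hmaps (4 ^ a) hfib
      exact_mod_cast this
    unfold P1 P2
    rw [div_le_div_iff₀ (by positivity) (by positivity)]
    calc (A.card : ℚ) * 4 ^ (k + 1) ≤ (4 ^ a * B.card) * 4 ^ (k + 1) := by
          apply mul_le_mul_of_nonneg_right hcard (by positivity)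
      _ = (B.card : ℚ) * 4 ^ (k + a + 1) := by ring
  · exact fun t H => main2 k p a hpk t H
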